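/- Let h > 0 and let (Z1, Z2) be a random vector with values in (0,∞)² with joint density l_h, whose margins are standard Fréchet. Let η1, η2 ∈ ℝ, τ1, τ2 > 0, ξ1, ξ2 ≠ 0, and β1, β2 positive integers with β1ξ1 < 1/2 and β2ξ2 < 1/2. Set W_i = (η_i − τ_i/ξ_i) + (τ_i/ξ_i) Z_i^{ξ_i} for i = 1, 2. Then Cov(W1^{β1}, W2^{β2}) = Σ_{k1=0}^{β1} Σ_{k2=0}^{β2} B_{k1,k2} [ g^(s)_{(β1−k1)ξ1, (β2−k2)ξ2}(h) − Γ(1 − (β1−k1)ξ1) Γ(1 − (β2−k2)ξ2) ], where B_{k1,k2} = binom(β1,k1) (η1 − τ1/ξ1)^{k1} (τ1/ξ1)^{β1−k1} binom(β2,k2) (η2 − τ2/ξ2)^{k2} (τ2/ξ2)^{β2−k2}. -/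

import Mathlib

open MeasureTheory

noncomputable def nPdf (x : ℝ) : ℝ := Real.exp (-(x ^ 2) / 2) / Real.sqrt (2 * Real.pi)

noncomputable def nCdf (x : ℝ) : ℝ := ∫ t in Set.Iic x, nPdf t

noncomputable def C1 (θ h : ℝ) : ℝ :=
  nCdf (h / 2 + Real.log θ / h) + (1 / θ) * nCdf (h / 2 - Real.log θ / h)

noncomputable def C2 (θ h : ℝ) : ℝ :=
  (nCdf (h / 2 + Real.log θ / h) + (1 / h) * nPdf (h / 2 + Real.log θ / h)
      - (1 / (h * θ)) * nPdf (h / 2 - Real.log θ / h))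
    * ((1 / θ ^ 2) * nCdf (h / 2 - Real.log θ / h)
      + (1 / (h * θ ^ 2)) * nPdf (h / 2 - Real.log θ / h)
      - (1 / (h * θ)) * nPdf (h / 2 + Real.log θ / h))

noncomputable def C3 (θ h : ℝ) : ℝ :=
  (1 / (h ^ 2 * θ)) * (h / 2 - Real.log θ / h) * nPdf (h / 2 + Real.log θ / h)
    + (1 / (h ^ 2 * θ ^ 2)) * (h / 2 + Real.log θ / h) * nPdf (h / 2 - Real.log θ / h)

noncomputable def gs (β1 β2 h : ℝ) : ℝ :=
  if h = 0 then Real.Gamma (1 - β1 - β2)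
  else ∫ θ in Set.Ioi (0 : ℝ),
    θ ^ β2 * (C2 θ h * C1 θ h ^ (β1 + β2 - 2) * Real.Gamma (2 - β1 - β2)
      + C3 θ h * C1 θ h ^ (β1 + β2 - 1) * Real.Gamma (1 - β1 - β2))

/-- The bivariate density `l_h` on `(0,∞)²` of the Hüsler–Reiss / Brown–Resnick pair. -/
noncomputable def lBR (h z1 z2 : ℝ) : ℝ :=
  (Real.exp (-(nCdf (h / 2 + Real.log (z2 / z1) / h)) / z1
      - (nCdf (h / 2 - Real.log (z2 / z1) / h)) / z2))
    * ((nCdf (h / 2 + Real.log (z2 / z1) / h) / z1 ^ 2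
          + nPdf (h / 2 + Real.log (z2 / z1) / h) / (h * z1 ^ 2)
          - nPdf (h / 2 - Real.log (z2 / z1) / h) / (h * z1 * z2))
        * (nCdf (h / 2 - Real.log (z2 / z1) / h) / z2 ^ 2
          + nPdf (h / 2 - Real.log (z2 / z1) / h) / (h * z2 ^ 2)
          - nPdf (h / 2 + Real.log (z2 / z1) / h) / (h * z1 * z2))
      + (h / 2 - Real.log (z2 / z1) / h) * nPdf (h / 2 + Real.log (z2 / z1) / h)
          / (h ^ 2 * z1 ^ 2 * z2)
      + (h / 2 + Real.log (z2 / z1) / h) * nPdf (h / 2 - Real.log (z2 / z1) / h)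
          / (h ^ 2 * z1 * z2 ^ 2))

/-- Covariance of two square-integrable real random variables:
`Cov(U,V) = E[UV] - E[U]E[V]`. -/
noncomputable def covar {Ω : Type*} [MeasurableSpace Ω] (P : MeasureTheory.Measure Ω)
    (U V : Ω → ℝ) : ℝ :=
  (∫ ω, U ω * V ω ∂P) - (∫ ω, U ω ∂P) * (∫ ω, V ω ∂P)

def IsStdFrechet {Ω : Type*} [MeasurableSpace Ω] (P : Measure Ω) (X : Ω → ℝ) : Prop :=
  ∀ x : ℝ, P {ω | X ω ≤ x} = if 0 < x then ENNReal.ofReal (Real.exp (-1 / x)) else 0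



open Real Set Filter

lemma nPdf_pos (x : ℝ) : 0 < nPdf x := by
  unfold nPdf
  positivity

lemma continuous_nPdf : Continuous nPdf := by
  unfold nPdf
  fun_prop

lemma integrable_nPdf : Integrable nPdf := by
  unfold nPdf
  apply Integrable.div_const
  have := integrable_exp_neg_mul_sq (by norm_num : (0:ℝ) < 1/2)
  refine this.congr (Eventually.of_forall fun x => ?_)
  ring_nf

lemma integral_nPdf : ∫ x, nPdf x = 1 := by
  unfold nPdf
  rw [integral_div]
  rw [show (fun x : ℝ => Real.exp (-(x^2)/2)) = (fun x : ℝ => Real.exp (-(1/2) * x^2)) from funext fun x => by ring_nf]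
  rw [integral_gaussian]
  rw [div_eq_one_iff_eq (by positivity)]
  rw [show π / (1/2) = 2 * π by ring]

lemma nCdf_nonneg (x : ℝ) : 0 ≤ nCdf x :=
  setIntegral_nonneg measurableSet_Iic fun t _ => (nPdf_pos t).le

lemma nCdf_mono : Monotone nCdf := fun a b hab =>
  setIntegral_mono_set integrable_nPdf.integrableOn
    (Eventually.of_forall fun t => (nPdf_pos t).le)
    (HasSubset.Subset.eventuallyLE (Iic_subset_Iic.2 hab))

lemma measurable_nCdf : Measurable nCdf := nCdf_mono.measurable

lemma nCdf_pos (x : ℝ) : 0 < nCdf x := by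
  have : ∫ t in Set.Iic (x-1), nPdf t > 0 := by
    refine (setIntegral_pos_iff_support_of_nonneg_ae ?_ ?_).2 ?_
    · exact Eventually.of_forall fun t => (nPdf_pos t).le
    · exact integrable_nPdf.integrableOn
    · have : Function.support nPdf = Set.univ := by
        ext t; simp [Function.mem_support, (nPdf_pos t).ne']
      rw [this]
      simp [Set.inter_univ]
  exact lt_of_lt_of_le this (nCdf_mono (by linarith))

lemma nCdf_le_one (x : ℝ) : nCdf x ≤ 1 := by
  rw [← integral_nPdf]
  exact setIntegral_le_integral integrable_nPdf (Eventually.of_forall fun t => (nPdf_pos t).le)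

lemma nPdf_flip {h θ : ℝ} (hh : h ≠ 0) (hθ : 0 < θ) :
    nPdf (h / 2 - Real.log θ / h) = θ * nPdf (h / 2 + Real.log θ / h) := by
  unfold nPdf
  rw [mul_div_assoc', ← Real.exp_log hθ, ← Real.exp_add]
  congr 1
  rw [Real.log_exp]
  congr 1
  field_simp
  ring

lemma C1_pos {h θ : ℝ} (hθ : 0 < θ) : 0 < C1 θ h := by
  have := nCdf_pos (h / 2 + Real.log θ / h)
  have := nCdf_pos (h / 2 - Real.log θ / h)
  have : 0 < (1/θ) * nCdf (h / 2 - Real.log θ / h) := by positivity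
  unfold C1; linarith [nCdf_pos (h / 2 + Real.log θ / h)]

lemma C2_eq {h θ : ℝ} (hh : h ≠ 0) (hθ : 0 < θ) :
    C2 θ h = nCdf (h / 2 + Real.log θ / h) * nCdf (h / 2 - Real.log θ / h) / θ ^ 2 := by
  unfold C2
  rw [nPdf_flip hh hθ]
  field_simp
  ring

lemma C3_eq {h θ : ℝ} (hh : h ≠ 0) (hθ : 0 < θ) :
    C3 θ h = nPdf (h / 2 + Real.log θ / h) / (h * θ) := by
  unfold C3
  rw [nPdf_flip hh hθ]
  field_simp
  ring

lemma lBR_eq {h z1 z2 : ℝ} (hh : h ≠ 0) (h1 : 0 < z1) (h2 : 0 < z2) :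
    lBR h z1 z2 = Real.exp (-(nCdf (h / 2 + Real.log (z2 / z1) / h)) / z1
      - (nCdf (h / 2 - Real.log (z2 / z1) / h)) / z2)
      * (nCdf (h / 2 + Real.log (z2 / z1) / h) * nCdf (h / 2 - Real.log (z2 / z1) / h)
            / (z1 ^ 2 * z2 ^ 2)
        + nPdf (h / 2 + Real.log (z2 / z1) / h) / (h * z1 ^ 2 * z2)) := by
  unfold lBR
  rw [nPdf_flip hh (div_pos h2 h1)]
  have hz : z2 / z1 * z1 = z2 := div_mul_cancel₀ _ h1.ne'
  congr 1
  field_simp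
  ring

noncomputable def expM : Measure ℝ :=
  (volume.restrict (Set.Ioi 0)).withDensity (fun u => ENNReal.ofReal (Real.exp (-u)))

noncomputable def frechetM : Measure ℝ := expM.map (fun u => u⁻¹)

lemma exp_tail (c : ℝ) :
    ∫⁻ u in Set.Ici c, ENNReal.ofReal (Real.exp (-u)) = ENNReal.ofReal (Real.exp (-c)) := by
  rw [← integral_exp_neg_Ioi c, ofReal_integral_eq_lintegral_ofReal
      (by have := exp_neg_integrableOn_Ioi c one_pos; simp only [neg_mul, one_mul] at this; exact this)
      (Eventually.of_forall fun u => (Real.exp_pos _).le)]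
  exact (setLIntegral_congr Ioi_ae_eq_Ici).symm

lemma expM_apply {s : Set ℝ} (hs : MeasurableSet s) :
    expM s = ∫⁻ u in s ∩ Set.Ioi 0, ENNReal.ofReal (Real.exp (-u)) := by
  rw [expM, withDensity_apply _ hs, Measure.restrict_restrict hs]

lemma frechetM_Iic (x : ℝ) :
    frechetM (Set.Iic x) = if 0 < x then ENNReal.ofReal (Real.exp (-1 / x)) else 0 := by
  rw [frechetM, Measure.map_apply measurable_inv measurableSet_Iic,
    expM_apply (measurable_inv measurableSet_Iic)]
  by_cases hx : 0 < x
  · rw [if_pos hx]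
    have hset : (fun u : ℝ => u⁻¹) ⁻¹' Set.Iic x ∩ Set.Ioi 0 = Set.Ici x⁻¹ := by
      ext u
      simp only [Set.mem_inter_iff, Set.mem_preimage, Set.mem_Iic, Set.mem_Ioi, Set.mem_Ici]
      constructor
      · rintro ⟨h1, h2⟩
        rwa [← inv_le_comm₀ h2 hx]
      · intro h1
        have hu : 0 < u := lt_of_lt_of_le (inv_pos.2 hx) h1
        exact ⟨(inv_le_comm₀ hu hx).2 h1, hu⟩
    rw [hset, exp_tail, neg_div, one_div]
  · rw [if_neg hx]
    have hset : (fun u : ℝ => u⁻¹) ⁻¹' Set.Iic x ∩ Set.Ioi 0 = ∅ := by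
      ext u
      simp only [Set.mem_inter_iff, Set.mem_preimage, Set.mem_Iic, Set.mem_Ioi,
        Set.mem_empty_iff_false, iff_false, not_and]
      intro h1 h2
      exact hx (lt_of_lt_of_le (inv_pos.2 h2) h1)
    rw [hset]
    simp

instance : IsProbabilityMeasure frechetM := by
  constructor
  rw [frechetM, Measure.map_apply measurable_inv MeasurableSet.univ]
  simp only [Set.preimage_univ]
  rw [expM_apply MeasurableSet.univ, Set.univ_inter, setLIntegral_congr Ioi_ae_eq_Ici, exp_tail]
  simp

lemma isStdFrechet_map {Ω : Type*} [MeasurableSpace Ω] {P : Measure Ω} [IsProbabilityMeasure P]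
    {X : Ω → ℝ} (hX : Measurable X) (hm : IsStdFrechet P X) : P.map X = frechetM := by
  refine MeasureTheory.Measure.ext_of_Iic (P.map X) frechetM fun x => ?_
  rw [Measure.map_apply hX measurableSet_Iic, frechetM_Iic]
  exact hm x

lemma frechet_lintegral {a : ℝ} (ha : a < 1) :
    ∫⁻ x, ENNReal.ofReal (x ^ a) ∂frechetM = ENNReal.ofReal (Real.Gamma (1 - a)) := by
  rw [frechetM, lintegral_map (by fun_prop) measurable_inv, expM,
    lintegral_withDensity_eq_lintegral_mul _ (by fun_prop) (by fun_prop)]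
  simp only [Pi.mul_apply]
  rw [Real.Gamma_eq_integral (by linarith), ofReal_integral_eq_lintegral_ofReal
      (Real.GammaIntegral_convergent (by linarith))
      ((ae_restrict_iff' measurableSet_Ioi).2 (Eventually.of_forall fun u hu => by have := Set.mem_Ioi.1 hu; positivity))]
  refine setLIntegral_congr_fun measurableSet_Ioi (fun u hu => ?_)
  rw [← ENNReal.ofReal_mul (Real.exp_pos _).le]
  congr 1
  rw [Real.inv_rpow hu.le, ← Real.rpow_neg hu.le]
  ring_nf


lemma frechet_lintegral' {Ω : Type*} [MeasurableSpace Ω] {P : Measure Ω}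
    {X : Ω → ℝ} (hX : Measurable X) (hF : P.map X = frechetM) {a : ℝ} (ha : a < 1) :
    ∫⁻ ω, ENNReal.ofReal (X ω ^ a) ∂P = ENNReal.ofReal (Real.Gamma (1 - a)) := by
  have : ∫⁻ ω, ENNReal.ofReal (X ω ^ a) ∂P
      = ∫⁻ x, ENNReal.ofReal (x ^ a) ∂(P.map X) := by
    rw [lintegral_map (by fun_prop) hX]
  rw [this, hF, frechet_lintegral ha]

lemma frechet_integrable_rpow {Ω : Type*} [MeasurableSpace Ω] {P : Measure Ω}
    {X : Ω → ℝ} (hX : Measurable X) (hXpos : ∀ ω, 0 < X ω)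
    (hF : P.map X = frechetM) {a : ℝ} (ha : a < 1) :
    Integrable (fun ω => X ω ^ a) P := by
  have hm : Measurable (fun ω => X ω ^ a) := by fun_prop
  refine ⟨hm.aestronglyMeasurable, ?_⟩
  rw [hasFiniteIntegral_iff_ofReal
      (Eventually.of_forall fun ω => Real.rpow_nonneg (hXpos ω).le a)]
  rw [frechet_lintegral' hX hF ha]
  exact ENNReal.ofReal_lt_top

lemma frechet_integral_rpow {Ω : Type*} [MeasurableSpace Ω] {P : Measure Ω}
    {X : Ω → ℝ} (hX : Measurable X) (hXpos : ∀ ω, 0 < X ω)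
    (hF : P.map X = frechetM) {a : ℝ} (ha : a < 1) :
    ∫ ω, X ω ^ a ∂P = Real.Gamma (1 - a) := by
  rw [integral_eq_lintegral_of_nonneg_ae
      (Eventually.of_forall fun ω => Real.rpow_nonneg (hXpos ω).le a)
      (by fun_prop : Measurable fun ω => X ω ^ a).aestronglyMeasurable]
  rw [frechet_lintegral' hX hF ha, ENNReal.toReal_ofReal (Real.Gamma_pos_of_pos (by linarith)).le]

lemma lintegral_image_1d {s : Set ℝ} {f f' : ℝ → ℝ} (hs : MeasurableSet s)
    (hf' : ∀ x ∈ s, HasDerivWithinAt f (f' x) s x) (hf : Set.InjOn f s) (g : ℝ → ENNReal) :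
    ∫⁻ x in f '' s, g x = ∫⁻ x in s, ENNReal.ofReal |f' x| * g (f x) := by
  simpa only [ContinuousLinearMap.det_toSpanSingleton] using
    lintegral_image_eq_lintegral_abs_det_fderiv_mul volume hs
      (fun x hx => (hf' x hx).hasFDerivWithinAt) hf g

lemma lintegral_Ioi_mul_left {c : ℝ} (hc : 0 < c) (g : ℝ → ENNReal) :
    ∫⁻ x in Set.Ioi (0:ℝ), g x = ∫⁻ θ in Set.Ioi (0:ℝ), ENNReal.ofReal c * g (c * θ) := by
  have himg : (fun θ : ℝ => c * θ) '' Set.Ioi 0 = Set.Ioi 0 := by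
    ext y
    simp only [Set.mem_image, Set.mem_Ioi]
    constructor
    · rintro ⟨θ, hθ, rfl⟩; positivity
    · intro hy; exact ⟨y / c, by positivity, by field_simp⟩
  rw [← himg, lintegral_image_1d (f' := fun _ => c) measurableSet_Ioi
    (fun x _ => by simpa using ((hasDerivAt_id x).const_mul c).hasDerivWithinAt)
    (fun a _ b _ hab => by
      have := mul_right_injective₀ hc.ne' hab
      exact this) g]
  simp [abs_of_pos hc, himg]

lemma lintegral_gamma_basic {t : ℝ} (ht : 0 < t) :
    ∫⁻ x in Set.Ioi (0:ℝ), ENNReal.ofReal (Real.exp (-x) * x ^ (t - 1))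
      = ENNReal.ofReal (Real.Gamma t) := by
  rw [Real.Gamma_eq_integral ht, ofReal_integral_eq_lintegral_ofReal
      (Real.GammaIntegral_convergent ht)
      ((ae_restrict_iff' measurableSet_Ioi).2 (Eventually.of_forall fun u hu =>
        by have := Set.mem_Ioi.1 hu; positivity))]

lemma lintegral_gamma {c t : ℝ} (hc : 0 < c) (ht : 0 < t) :
    ∫⁻ x in Set.Ioi (0:ℝ), ENNReal.ofReal (Real.exp (-(c/x)) * x ^ (-1 - t))
      = ENNReal.ofReal (c ^ (-t) * Real.Gamma t) := by
  have himg : (fun u : ℝ => c / u) '' Set.Ioi 0 = Set.Ioi 0 := by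
    ext y
    simp only [Set.mem_image, Set.mem_Ioi]
    constructor
    · rintro ⟨u, hu, rfl⟩; positivity
    · intro hy; exact ⟨c / y, by positivity, by field_simp⟩
  rw [← himg, lintegral_image_1d (f' := fun u => -(c / u ^ 2)) measurableSet_Ioi
    (fun u hu => by
      have hu' : u ≠ 0 := (Set.mem_Ioi.1 hu).ne'
      simpa [div_eq_mul_inv, mul_comm] using
        ((hasDerivAt_inv hu').const_mul c).hasDerivWithinAt)
    (fun a ha b hb hab => by
      have ha' : a ≠ 0 := (Set.mem_Ioi.1 ha).ne'
      have hb' : b ≠ 0 := (Set.mem_Ioi.1 hb).ne'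
      field_simp at hab
      exact hab.symm) _]
  have key : ∀ u ∈ Set.Ioi (0:ℝ),
      ENNReal.ofReal |(-(c / u ^ 2))| *
        ENNReal.ofReal (Real.exp (-(c / (c / u))) * (c / u) ^ (-1 - t))
      = ENNReal.ofReal (c ^ (-t)) * ENNReal.ofReal (Real.exp (-u) * u ^ (t - 1)) := by
    intro u hu
    have hu : (0:ℝ) < u := hu
    have h1 : c / (c / u) = u := by field_simp
    rw [h1, abs_of_neg (neg_lt_zero.2 (by positivity : (0:ℝ) < c / u^2)), neg_neg,
      ← ENNReal.ofReal_mul (by positivity), ← ENNReal.ofReal_mul (by positivity)]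
    congr 1
    have h2 : (c / u) ^ (-1 - t) = Real.exp ((-1 - t) * (Real.log c - Real.log u)) := by
      rw [Real.rpow_def_of_pos (by positivity), Real.log_div hc.ne' hu.ne', mul_comm]
    have h3 : c ^ (-t) = Real.exp ((-t) * Real.log c) := by
      rw [Real.rpow_def_of_pos hc, mul_comm]
    have h4 : u ^ (t - 1) = Real.exp ((t - 1) * Real.log u) := by
      rw [Real.rpow_def_of_pos hu, mul_comm]
    have h5 : c / u ^ 2 = Real.exp (Real.log c - 2 * Real.log u) := by
      rw [Real.exp_sub, Real.exp_log hc]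
      congr 1
      rw [show (2:ℝ) * Real.log u = Real.log u + Real.log u by ring, Real.exp_add,
        Real.exp_log hu]
      ring
    rw [h2, h3, h4, h5]
    simp only [← Real.exp_add]
    congr 1
    ring
  rw [setLIntegral_congr_fun measurableSet_Ioi key,
    lintegral_const_mul' _ _ ENNReal.ofReal_lt_top.ne, lintegral_gamma_basic ht,
    ← ENNReal.ofReal_mul (by positivity)]

lemma inner_gamma {C s m A B : ℝ} (hC : 0 < C) (hs : s < 1) (hm : 0 ≤ m) (hA : 0 ≤ A)
    (hB : 0 ≤ B) :
    ∫⁻ x in Set.Ioi (0:ℝ),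
        ENNReal.ofReal (m * (Real.exp (-(C/x)) * (A * x ^ (s-3) + B * x ^ (s-2))))
      = ENNReal.ofReal (m * (A * C ^ (s-2) * Real.Gamma (2-s)
          + B * C ^ (s-1) * Real.Gamma (1-s))) := by
  have e1 : (0:ℝ) < 2 - s := by linarith
  have e2 : (0:ℝ) < 1 - s := by linarith
  have G1 : (0:ℝ) < Real.Gamma (2-s) := Real.Gamma_pos_of_pos e1
  have G2 : (0:ℝ) < Real.Gamma (1-s) := Real.Gamma_pos_of_pos e2
  have ptwise : ∀ x ∈ Set.Ioi (0:ℝ),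
      ENNReal.ofReal (m * (Real.exp (-(C/x)) * (A * x ^ (s-3) + B * x ^ (s-2))))
        = ENNReal.ofReal (m*A) * ENNReal.ofReal (Real.exp (-(C/x)) * x ^ (-1-(2-s)))
          + ENNReal.ofReal (m*B) * ENNReal.ofReal (Real.exp (-(C/x)) * x ^ (-1-(1-s))) := by
    intro x hx
    have hx : (0:ℝ) < x := hx
    rw [← ENNReal.ofReal_mul (by positivity), ← ENNReal.ofReal_mul (by positivity),
      ← ENNReal.ofReal_add (by positivity) (by positivity)]
    congr 1
    rw [show (-1:ℝ)-(2-s) = s-3 by ring, show (-1:ℝ)-(1-s) = s-2 by ring]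
    ring
  rw [setLIntegral_congr_fun measurableSet_Ioi ptwise,
    lintegral_add_left (by fun_prop), lintegral_const_mul' _ _ ENNReal.ofReal_lt_top.ne,
    lintegral_const_mul' _ _ ENNReal.ofReal_lt_top.ne, lintegral_gamma hC e1,
    lintegral_gamma hC e2, ← ENNReal.ofReal_mul (by positivity),
    ← ENNReal.ofReal_mul (by positivity), ← ENNReal.ofReal_add (by positivity) (by positivity)]
  congr 1
  rw [show (-(2-s):ℝ) = s-2 by ring, show (-(1-s):ℝ) = s-1 by ring]
  ring


lemma measurable_nPdf : Measurable nPdf := by unfold nPdf; fun_prop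

lemma pointwise_sub {h : ℝ} (hh : 0 < h) {θ z1 a1 a2 : ℝ} (hθ : 0 < θ) (hz : 0 < z1) :
    z1 * (lBR h z1 (z1 * θ) * (z1 ^ a1 * (z1*θ) ^ a2))
      = θ ^ a2 * (Real.exp (-(C1 θ h / z1))
          * (C2 θ h * z1 ^ (a1+a2-3) + C3 θ h * z1 ^ (a1+a2-2))) := by
  have hz2 : 0 < z1 * θ := by positivity
  have hlog : z1 * θ / z1 = θ := mul_div_cancel_left₀ θ hz.ne'
  rw [lBR_eq hh.ne' hz hz2, hlog, C2_eq hh.ne' hθ, C3_eq hh.ne' hθ]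
  simp only [C1]
  have hexp : -(nCdf (h/2 + Real.log θ/h)) / z1 - nCdf (h/2 - Real.log θ/h) / (z1*θ)
      = -((nCdf (h/2 + Real.log θ/h) + 1/θ * nCdf (h/2 - Real.log θ/h)) / z1) := by
    field_simp
    ring
  rw [hexp]
  have hS3 : z1 ^ (a1+a2-3) = z1 ^ a1 * z1 ^ a2 / z1 ^ (3:ℕ) := by
    rw [← Real.rpow_natCast z1 3, ← Real.rpow_add hz, ← Real.rpow_sub hz]
    norm_num
  have hS2 : z1 ^ (a1+a2-2) = z1 ^ a1 * z1 ^ a2 / z1 ^ (2:ℕ) := by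
    rw [← Real.rpow_natCast z1 2, ← Real.rpow_add hz, ← Real.rpow_sub hz]
    norm_num
  rw [hS3, hS2, Real.mul_rpow hz.le hθ.le]
  field_simp

attribute [fun_prop] measurable_nCdf measurable_nPdf Real.measurable_log Real.measurable_exp

lemma measurable_lBR (h : ℝ) : Measurable (fun p : ℝ × ℝ => lBR h p.1 p.2) := by
  unfold lBR
  fun_prop

lemma measurable_C1 (h : ℝ) : Measurable (fun θ => C1 θ h) := by unfold C1; fun_prop
lemma measurable_C2 (h : ℝ) : Measurable (fun θ => C2 θ h) := by unfold C2; fun_prop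
lemma measurable_C3 (h : ℝ) : Measurable (fun θ => C3 θ h) := by unfold C3; fun_prop

lemma C2_nonneg {h θ : ℝ} (hh : h ≠ 0) (hθ : 0 < θ) : 0 ≤ C2 θ h := by
  rw [C2_eq hh hθ]
  have h1 := nCdf_nonneg (h / 2 + Real.log θ / h)
  have h2 := nCdf_nonneg (h / 2 - Real.log θ / h)
  positivity

lemma C3_nonneg {h θ : ℝ} (hh : 0 < h) (hθ : 0 < θ) : 0 ≤ C3 θ h := by
  rw [C3_eq hh.ne' hθ]
  have := (nPdf_pos (h / 2 + Real.log θ / h)).le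
  positivity

lemma joint_lintegral {h : ℝ} (hh : 0 < h) {a1 a2 : ℝ} (ha1 : a1 < 1/2) (ha2 : a2 < 1/2) :
    ∫⁻ p in Set.Ioi (0:ℝ) ×ˢ Set.Ioi (0:ℝ),
        ENNReal.ofReal (lBR h p.1 p.2 * (p.1 ^ a1 * p.2 ^ a2)) ∂(volume : Measure (ℝ×ℝ))
      = ∫⁻ θ in Set.Ioi (0:ℝ), ENNReal.ofReal (θ ^ a2
          * (C2 θ h * C1 θ h ^ (a1 + a2 - 2) * Real.Gamma (2 - a1 - a2)
            + C3 θ h * C1 θ h ^ (a1 + a2 - 1) * Real.Gamma (1 - a1 - a2))) := by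
  have hs : a1 + a2 < 1 := by linarith
  have hmeas : Measurable (fun p : ℝ × ℝ =>
      ENNReal.ofReal (lBR h p.1 p.2 * (p.1 ^ a1 * p.2 ^ a2))) := by
    have := measurable_lBR h
    fun_prop
  rw [Measure.volume_eq_prod, ← Measure.prod_restrict, lintegral_prod _ hmeas.aemeasurable]
  have step1 : ∀ z1 ∈ Set.Ioi (0:ℝ),
      (∫⁻ z2 in Set.Ioi (0:ℝ), ENNReal.ofReal (lBR h z1 z2 * (z1 ^ a1 * z2 ^ a2)))
        = ∫⁻ θ in Set.Ioi (0:ℝ), ENNReal.ofReal (θ ^ a2 * (Real.exp (-(C1 θ h / z1))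
            * (C2 θ h * z1 ^ (a1+a2-3) + C3 θ h * z1 ^ (a1+a2-2)))) := by
    intro z1 hz1
    have hz1 : (0:ℝ) < z1 := hz1
    rw [lintegral_Ioi_mul_left hz1
      (fun z2 => ENNReal.ofReal (lBR h z1 z2 * (z1 ^ a1 * z2 ^ a2)))]
    refine setLIntegral_congr_fun measurableSet_Ioi (fun θ hθ => ?_)
    have hθ : (0:ℝ) < θ := hθ
    rw [← ENNReal.ofReal_mul hz1.le, ← mul_assoc (lBR h z1 (z1*θ)), ← pointwise_sub hh hθ hz1]
    ring_nf
  rw [setLIntegral_congr_fun measurableSet_Ioi step1]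
  rw [lintegral_lintegral_swap (by
    have h1 := measurable_C1 h
    have h2 := measurable_C2 h
    have h3 := measurable_C3 h
    fun_prop)]
  refine setLIntegral_congr_fun measurableSet_Ioi (fun θ hθ => ?_)
  have hθ : (0:ℝ) < θ := hθ
  rw [inner_gamma (C1_pos hθ) hs (Real.rpow_nonneg hθ.le a2) (C2_nonneg hh.ne' hθ)
    (C3_nonneg hh hθ)]
  rw [show (2:ℝ) - (a1+a2) = 2 - a1 - a2 by ring, show (1:ℝ) - (a1+a2) = 1 - a1 - a2 by ring]

lemma lBR_nonneg {h z1 z2 : ℝ} (hh : 0 < h) (h1 : 0 < z1) (h2 : 0 < z2) : 0 ≤ lBR h z1 z2 := by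
  rw [lBR_eq hh.ne' h1 h2]
  have a1 := nCdf_nonneg (h / 2 + Real.log (z2 / z1) / h)
  have a2 := nCdf_nonneg (h / 2 - Real.log (z2 / z1) / h)
  have a3 := (nPdf_pos (h / 2 + Real.log (z2 / z1) / h)).le
  positivity

section Joint

variable {Ω : Type*} [MeasurableSpace Ω] (P : Measure Ω) [IsProbabilityMeasure P]
  {h : ℝ} {Z : Ω → ℝ × ℝ}

/-- The joint moment identity. -/
lemma joint_moment (hh : 0 < h) (hZ : Measurable Z) (hpos : ∀ ω, 0 < (Z ω).1 ∧ 0 < (Z ω).2)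
    (hdens : P.map Z = ((volume : Measure (ℝ × ℝ)).restrict
        (Set.Ioi (0 : ℝ) ×ˢ Set.Ioi (0 : ℝ))).withDensity
        (fun p => ENNReal.ofReal (lBR h p.1 p.2)))
    {a1 a2 : ℝ} (ha1 : a1 < 1/2) (ha2 : a2 < 1/2) :
    ∫ ω, (Z ω).1 ^ a1 * (Z ω).2 ^ a2 ∂P = gs a1 a2 h := by
  have hrect : MeasurableSet (Set.Ioi (0:ℝ) ×ˢ Set.Ioi (0:ℝ)) :=
    measurableSet_Ioi.prod measurableSet_Ioi
  have hfm : Measurable (fun p : ℝ × ℝ => p.1 ^ a1 * p.2 ^ a2) := by fun_prop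
  -- LHS to lintegral
  have hnn : 0 ≤ᵐ[P] fun ω => (Z ω).1 ^ a1 * (Z ω).2 ^ a2 :=
    Eventually.of_forall fun ω => mul_nonneg (Real.rpow_nonneg (hpos ω).1.le _)
      (Real.rpow_nonneg (hpos ω).2.le _)
  rw [integral_eq_lintegral_of_nonneg_ae hnn ((hfm.comp hZ).aestronglyMeasurable)]
  have key : ∫⁻ ω, ENNReal.ofReal ((Z ω).1 ^ a1 * (Z ω).2 ^ a2) ∂P
      = ∫⁻ θ in Set.Ioi (0:ℝ), ENNReal.ofReal (θ ^ a2
          * (C2 θ h * C1 θ h ^ (a1 + a2 - 2) * Real.Gamma (2 - a1 - a2)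
            + C3 θ h * C1 θ h ^ (a1 + a2 - 1) * Real.Gamma (1 - a1 - a2))) := by
    have e0 : ∫⁻ ω, ENNReal.ofReal ((Z ω).1 ^ a1 * (Z ω).2 ^ a2) ∂P
        = ∫⁻ p, ENNReal.ofReal (p.1 ^ a1 * p.2 ^ a2) ∂(P.map Z) :=
      (lintegral_map (f := fun p : ℝ × ℝ => ENNReal.ofReal (p.1 ^ a1 * p.2 ^ a2))
        (by fun_prop) hZ).symm
    rw [e0, hdens,
      lintegral_withDensity_eq_lintegral_mul _ (by have := measurable_lBR h; fun_prop)
        (by fun_prop)]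
    rw [← joint_lintegral hh ha1 ha2]
    refine setLIntegral_congr_fun hrect (fun p hp => ?_)
    obtain ⟨hp1, hp2⟩ := Set.mem_prod.1 hp
    exact (ENNReal.ofReal_mul (lBR_nonneg hh hp1 hp2)).symm
  rw [key]
  -- RHS
  have hs : a1 + a2 < 1 := by linarith
  have hGnn : ∀ θ ∈ Set.Ioi (0:ℝ), 0 ≤ θ ^ a2
      * (C2 θ h * C1 θ h ^ (a1 + a2 - 2) * Real.Gamma (2 - a1 - a2)
        + C3 θ h * C1 θ h ^ (a1 + a2 - 1) * Real.Gamma (1 - a1 - a2)) := by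
    intro θ hθ
    have hθ : (0:ℝ) < θ := hθ
    have g1 : (0:ℝ) < Real.Gamma (2 - a1 - a2) := Real.Gamma_pos_of_pos (by linarith)
    have g2 : (0:ℝ) < Real.Gamma (1 - a1 - a2) := Real.Gamma_pos_of_pos (by linarith)
    have c1 := C1_pos (h := h) hθ
    have c2 := C2_nonneg hh.ne' hθ
    have c3 := C3_nonneg hh hθ
    positivity
  rw [gs, if_neg hh.ne']
  rw [integral_eq_lintegral_of_nonneg_ae
      ((ae_restrict_iff' measurableSet_Ioi).2 (Eventually.of_forall hGnn))
      (by
        have := measurable_C1 h; have := measurable_C2 h; have := measurable_C3 h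
        have hmm : Measurable (fun θ : ℝ => θ ^ a2
          * (C2 θ h * C1 θ h ^ (a1 + a2 - 2) * Real.Gamma (2 - a1 - a2)
            + C3 θ h * C1 θ h ^ (a1 + a2 - 1) * Real.Gamma (1 - a1 - a2))) := by fun_prop
        exact hmm.aestronglyMeasurable)]

end Joint

lemma sq_expand {x c : ℝ} (hx : 0 ≤ x) : x ^ (2*c) = (x ^ c) ^ (2:ℕ) := by
  rw [mul_comm, Real.rpow_mul hx, show ((2:ℝ)) = ((2:ℕ):ℝ) by norm_num, Real.rpow_natCast]


/-- Covariance formula for powers of GEV transforms of a Hüsler–Reiss pair with joint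
density `l_h` and standard Fréchet margins. -/
theorem stmt3 {Ω : Type*} [MeasurableSpace Ω] (P : Measure Ω) [IsProbabilityMeasure P]
    (h : ℝ) (hh : 0 < h) (Z : Ω → ℝ × ℝ) (hZ : Measurable Z)
    (hpos : ∀ ω, 0 < (Z ω).1 ∧ 0 < (Z ω).2)
    (hdens : P.map Z = ((volume : Measure (ℝ × ℝ)).restrict
        (Set.Ioi (0 : ℝ) ×ˢ Set.Ioi (0 : ℝ))).withDensity
        (fun p => ENNReal.ofReal (lBR h p.1 p.2)))
    (hm1 : IsStdFrechet P (fun ω => (Z ω).1)) (hm2 : IsStdFrechet P (fun ω => (Z ω).2))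
    (η1 η2 τ1 τ2 ξ1 ξ2 : ℝ) (hτ1 : 0 < τ1) (hτ2 : 0 < τ2) (hξ1 : ξ1 ≠ 0) (hξ2 : ξ2 ≠ 0)
    (β1 β2 : ℕ) (hβ1 : 0 < β1) (hβ2 : 0 < β2)
    (hb1 : (β1 : ℝ) * ξ1 < 1 / 2) (hb2 : (β2 : ℝ) * ξ2 < 1 / 2) :
    covar P (fun ω => ((η1 - τ1 / ξ1) + (τ1 / ξ1) * (Z ω).1 ^ ξ1) ^ β1)
        (fun ω => ((η2 - τ2 / ξ2) + (τ2 / ξ2) * (Z ω).2 ^ ξ2) ^ β2) =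
      ∑ k1 ∈ Finset.range (β1 + 1), ∑ k2 ∈ Finset.range (β2 + 1),
        ((β1.choose k1 : ℝ) * (η1 - τ1 / ξ1) ^ k1 * (τ1 / ξ1) ^ (β1 - k1)
          * (β2.choose k2 : ℝ) * (η2 - τ2 / ξ2) ^ k2 * (τ2 / ξ2) ^ (β2 - k2))
        * (gs (((β1 : ℝ) - k1) * ξ1) (((β2 : ℝ) - k2) * ξ2) h
            - Real.Gamma (1 - ((β1 : ℝ) - k1) * ξ1) * Real.Gamma (1 - ((β2 : ℝ) - k2) * ξ2)) := by
  have hZ1 : Measurable fun ω => (Z ω).1 := measurable_fst.comp hZ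
  have hZ2 : Measurable fun ω => (Z ω).2 := measurable_snd.comp hZ
  have hmap1 := isStdFrechet_map hZ1 hm1
  have hmap2 := isStdFrechet_map hZ2 hm2
  have hlt : ∀ (β : ℕ) (ξ : ℝ), (β:ℝ)*ξ < 1/2 → ∀ k ∈ Finset.range (β+1),
      ((β:ℝ)-(k:ℝ))*ξ < 1/2 := by
    intro β ξ hb k hk
    have hk' : (k:ℝ) ≤ (β:ℝ) := by exact_mod_cast Nat.lt_succ_iff.1 (Finset.mem_range.1 hk)
    rcases le_or_gt ξ 0 with hξ | hξ
    · have hβk : (0:ℝ) ≤ (β:ℝ) - k := by linarith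
      have := mul_nonpos_of_nonneg_of_nonpos hβk hξ
      linarith
    · have : ((β:ℝ)-k)*ξ ≤ (β:ℝ)*ξ := mul_le_mul_of_nonneg_right (by linarith) hξ.le
      linarith
  have hint1 : ∀ k ∈ Finset.range (β1+1),
      Integrable (fun ω => (Z ω).1 ^ (((β1:ℝ)-(k:ℝ))*ξ1)) P := fun k hk =>
    frechet_integrable_rpow hZ1 (fun ω => (hpos ω).1) hmap1
      (by have := hlt β1 ξ1 hb1 k hk; linarith)
  have hint2 : ∀ k ∈ Finset.range (β2+1),
      Integrable (fun ω => (Z ω).2 ^ (((β2:ℝ)-(k:ℝ))*ξ2)) P := fun k hk =>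
    frechet_integrable_rpow hZ2 (fun ω => (hpos ω).2) hmap2
      (by have := hlt β2 ξ2 hb2 k hk; linarith)
  have hint12 : ∀ k1 ∈ Finset.range (β1+1), ∀ k2 ∈ Finset.range (β2+1),
      Integrable (fun ω => (Z ω).1 ^ (((β1:ℝ)-(k1:ℝ))*ξ1)
        * (Z ω).2 ^ (((β2:ℝ)-(k2:ℝ))*ξ2)) P := by
    intro k1 hk1 k2 hk2
    have ha : ((β1:ℝ)-(k1:ℝ))*ξ1 < 1/2 := hlt β1 ξ1 hb1 k1 hk1
    have hb : ((β2:ℝ)-(k2:ℝ))*ξ2 < 1/2 := hlt β2 ξ2 hb2 k2 hk2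
    have I1 : Integrable (fun ω => (Z ω).1 ^ (2*(((β1:ℝ)-(k1:ℝ))*ξ1))) P :=
      frechet_integrable_rpow hZ1 (fun ω => (hpos ω).1) hmap1 (by linarith)
    have I2 : Integrable (fun ω => (Z ω).2 ^ (2*(((β2:ℝ)-(k2:ℝ))*ξ2))) P :=
      frechet_integrable_rpow hZ2 (fun ω => (hpos ω).2) hmap2 (by linarith)
    refine Integrable.mono' ((I1.add I2).div_const 2)
      ((show Measurable (fun ω => (Z ω).1 ^ (((β1:ℝ)-(k1:ℝ))*ξ1)
          * (Z ω).2 ^ (((β2:ℝ)-(k2:ℝ))*ξ2)) by fun_prop).aestronglyMeasurable)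
      (Eventually.of_forall fun ω => ?_)
    have h1 := (hpos ω).1
    have h2 := (hpos ω).2
    set x := (Z ω).1 ^ (((β1:ℝ)-(k1:ℝ))*ξ1) with hxdef
    set y := (Z ω).2 ^ (((β2:ℝ)-(k2:ℝ))*ξ2) with hydef
    have hxnn : 0 ≤ x := Real.rpow_nonneg h1.le _
    have hynn : 0 ≤ y := Real.rpow_nonneg h2.le _
    rw [Real.norm_eq_abs, abs_of_nonneg (mul_nonneg hxnn hynn)]
    simp only [Pi.add_apply]
    rw [sq_expand h1.le, sq_expand h2.le, ← hxdef, ← hydef]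
    nlinarith [sq_nonneg (x - y)]
  have hmarg1 : ∀ k ∈ Finset.range (β1+1),
      ∫ ω, (Z ω).1 ^ (((β1:ℝ)-(k:ℝ))*ξ1) ∂P = Real.Gamma (1 - ((β1:ℝ)-(k:ℝ))*ξ1) := fun k hk =>
    frechet_integral_rpow hZ1 (fun ω => (hpos ω).1) hmap1
      (by have := hlt β1 ξ1 hb1 k hk; linarith)
  have hmarg2 : ∀ k ∈ Finset.range (β2+1),
      ∫ ω, (Z ω).2 ^ (((β2:ℝ)-(k:ℝ))*ξ2) ∂P = Real.Gamma (1 - ((β2:ℝ)-(k:ℝ))*ξ2) := fun k hk =>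
    frechet_integral_rpow hZ2 (fun ω => (hpos ω).2) hmap2
      (by have := hlt β2 ξ2 hb2 k hk; linarith)
  have hjoint : ∀ k1 ∈ Finset.range (β1+1), ∀ k2 ∈ Finset.range (β2+1),
      ∫ ω, (Z ω).1 ^ (((β1:ℝ)-(k1:ℝ))*ξ1) * (Z ω).2 ^ (((β2:ℝ)-(k2:ℝ))*ξ2) ∂P
        = gs (((β1:ℝ)-(k1:ℝ))*ξ1) (((β2:ℝ)-(k2:ℝ))*ξ2) h := fun k1 hk1 k2 hk2 =>
    joint_moment P hh hZ hpos hdens (hlt β1 ξ1 hb1 k1 hk1) (hlt β2 ξ2 hb2 k2 hk2)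
  have hexp1 : ∀ ω, ((η1 - τ1/ξ1) + (τ1/ξ1) * (Z ω).1 ^ ξ1) ^ β1
      = ∑ k ∈ Finset.range (β1+1), ((β1.choose k : ℝ) * (η1-τ1/ξ1)^k * (τ1/ξ1)^(β1-k))
          * (Z ω).1 ^ (((β1:ℝ)-(k:ℝ))*ξ1) := by
    intro ω
    rw [add_pow]
    refine Finset.sum_congr rfl fun k hk => ?_
    have hk' : k ≤ β1 := Nat.lt_succ_iff.1 (Finset.mem_range.1 hk)
    have hz := (hpos ω).1
    rw [mul_pow, ← Real.rpow_natCast ((Z ω).1 ^ ξ1) (β1-k), ← Real.rpow_mul hz.le,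
      Nat.cast_sub hk', show ξ1 * ((β1:ℝ)-(k:ℝ)) = ((β1:ℝ)-(k:ℝ))*ξ1 by ring]
    ring
  have hexp2 : ∀ ω, ((η2 - τ2/ξ2) + (τ2/ξ2) * (Z ω).2 ^ ξ2) ^ β2
      = ∑ k ∈ Finset.range (β2+1), ((β2.choose k : ℝ) * (η2-τ2/ξ2)^k * (τ2/ξ2)^(β2-k))
          * (Z ω).2 ^ (((β2:ℝ)-(k:ℝ))*ξ2) := by
    intro ω
    rw [add_pow]
    refine Finset.sum_congr rfl fun k hk => ?_
    have hk' : k ≤ β2 := Nat.lt_succ_iff.1 (Finset.mem_range.1 hk)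
    have hz := (hpos ω).2
    rw [mul_pow, ← Real.rpow_natCast ((Z ω).2 ^ ξ2) (β2-k), ← Real.rpow_mul hz.le,
      Nat.cast_sub hk', show ξ2 * ((β2:ℝ)-(k:ℝ)) = ((β2:ℝ)-(k:ℝ))*ξ2 by ring]
    ring
  unfold covar
  have eU : ∫ ω, ((η1 - τ1/ξ1) + (τ1/ξ1) * (Z ω).1 ^ ξ1) ^ β1 ∂P
      = ∑ k ∈ Finset.range (β1+1), ((β1.choose k : ℝ) * (η1-τ1/ξ1)^k * (τ1/ξ1)^(β1-k))
          * Real.Gamma (1 - ((β1:ℝ)-(k:ℝ))*ξ1) := by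
    rw [show (fun ω => ((η1 - τ1/ξ1) + (τ1/ξ1) * (Z ω).1 ^ ξ1) ^ β1)
        = fun ω => ∑ k ∈ Finset.range (β1+1),
            ((β1.choose k : ℝ) * (η1-τ1/ξ1)^k * (τ1/ξ1)^(β1-k))
              * (Z ω).1 ^ (((β1:ℝ)-(k:ℝ))*ξ1) from funext hexp1]
    rw [integral_finset_sum _ (fun k hk => (hint1 k hk).const_mul _)]
    exact Finset.sum_congr rfl fun k hk => by rw [integral_const_mul _ _, hmarg1 k hk]
  have eV : ∫ ω, ((η2 - τ2/ξ2) + (τ2/ξ2) * (Z ω).2 ^ ξ2) ^ β2 ∂P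
      = ∑ k ∈ Finset.range (β2+1), ((β2.choose k : ℝ) * (η2-τ2/ξ2)^k * (τ2/ξ2)^(β2-k))
          * Real.Gamma (1 - ((β2:ℝ)-(k:ℝ))*ξ2) := by
    rw [show (fun ω => ((η2 - τ2/ξ2) + (τ2/ξ2) * (Z ω).2 ^ ξ2) ^ β2)
        = fun ω => ∑ k ∈ Finset.range (β2+1),
            ((β2.choose k : ℝ) * (η2-τ2/ξ2)^k * (τ2/ξ2)^(β2-k))
              * (Z ω).2 ^ (((β2:ℝ)-(k:ℝ))*ξ2) from funext hexp2]
    rw [integral_finset_sum _ (fun k hk => (hint2 k hk).const_mul _)]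
    exact Finset.sum_congr rfl fun k hk => by rw [integral_const_mul _ _, hmarg2 k hk]
  have eUV : ∫ ω, ((η1 - τ1/ξ1) + (τ1/ξ1) * (Z ω).1 ^ ξ1) ^ β1
        * ((η2 - τ2/ξ2) + (τ2/ξ2) * (Z ω).2 ^ ξ2) ^ β2 ∂P
      = ∑ k1 ∈ Finset.range (β1+1), ∑ k2 ∈ Finset.range (β2+1),
          (((β1.choose k1 : ℝ) * (η1-τ1/ξ1)^k1 * (τ1/ξ1)^(β1-k1))
            * ((β2.choose k2 : ℝ) * (η2-τ2/ξ2)^k2 * (τ2/ξ2)^(β2-k2)))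
          * gs (((β1:ℝ)-(k1:ℝ))*ξ1) (((β2:ℝ)-(k2:ℝ))*ξ2) h := by
    have hfe : (fun ω => ((η1 - τ1/ξ1) + (τ1/ξ1) * (Z ω).1 ^ ξ1) ^ β1
        * ((η2 - τ2/ξ2) + (τ2/ξ2) * (Z ω).2 ^ ξ2) ^ β2)
        = fun ω => ∑ k1 ∈ Finset.range (β1+1), ∑ k2 ∈ Finset.range (β2+1),
            (((β1.choose k1 : ℝ) * (η1-τ1/ξ1)^k1 * (τ1/ξ1)^(β1-k1))
              * ((β2.choose k2 : ℝ) * (η2-τ2/ξ2)^k2 * (τ2/ξ2)^(β2-k2)))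
            * ((Z ω).1 ^ (((β1:ℝ)-(k1:ℝ))*ξ1) * (Z ω).2 ^ (((β2:ℝ)-(k2:ℝ))*ξ2)) := by
      funext ω
      rw [hexp1 ω, hexp2 ω, Finset.sum_mul_sum]
      exact Finset.sum_congr rfl fun k1 _ => Finset.sum_congr rfl fun k2 _ => by ring
    rw [hfe, integral_finset_sum _ (fun k1 hk1 => integrable_finset_sum _
      (fun k2 hk2 => (hint12 k1 hk1 k2 hk2).const_mul _))]
    refine Finset.sum_congr rfl fun k1 hk1 => ?_
    rw [integral_finset_sum _ (fun k2 hk2 => (hint12 k1 hk1 k2 hk2).const_mul _)]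
    refine Finset.sum_congr rfl fun k2 hk2 => ?_
    rw [integral_const_mul _ _, hjoint k1 hk1 k2 hk2]
  rw [eU, eV, eUV, Finset.sum_mul_sum, ← Finset.sum_sub_distrib]
  refine Finset.sum_congr rfl fun k1 hk1 => ?_
  rw [← Finset.sum_sub_distrib]
  refine Finset.sum_congr rfl fun k2 hk2 => ?_
  ring
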